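/- Let S be a finite subset of a group G with |S| ≥ 4 and S closed under inversion and not containing the identity. Then the elements of S can be arranged in a cyclic sequence g₁, g₂, …, g_{|S|} such that gᵢ + g_{i+1} ≠ 0 for all i (indices modulo |S|). -/

import Mathlib

set_option linter.unusedSectionVars false
set_option maxHeartbeats 1000000

section AuxStmt10
variable {G : Type*} [AddGroup G] [DecidableEq G]

private lemma safe10 {x y : G} (hxy : x ≠ y) (h : x = -x ∨ y = -y) : x + y ≠ 0 := by
  intro hsum
  rcases h with h | h
  · exact hxy (by rw [eq_neg_of_add_eq_zero_right hsum, ← h])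
  · exact hxy (by rw [eq_neg_of_add_eq_zero_left hsum, ← h])

private lemma exists_rep10 (A : Finset G) (hA : ∀ x ∈ A, -x ∈ A ∧ x ≠ -x) :
    ∃ R : Finset G, (∀ x ∈ R, -x ∉ R) ∧ R ∪ R.image (fun x => -x) = A := by
  induction A using Finset.strongInduction with
  | _ A ih =>
    rcases A.eq_empty_or_nonempty with rfl | ⟨x, hx⟩
    · exact ⟨∅, by simp, by simp⟩
    · obtain ⟨hnx, hxnx⟩ := hA x hx
      have hsubset : {x, -x} ⊆ A := by
        intro y hy
        rcases Finset.mem_insert.1 hy with rfl | hy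
        · exact hx
        · rw [Finset.mem_singleton] at hy; subst hy; exact hnx
      have hss : A \ {x, -x} ⊂ A :=
        Finset.sdiff_ssubset hsubset ⟨x, Finset.mem_insert_self _ _⟩
      have hA' : ∀ y ∈ A \ {x, -x}, -y ∈ A \ {x, -x} ∧ y ≠ -y := by
        intro y hy
        rw [Finset.mem_sdiff, Finset.mem_insert, Finset.mem_singleton] at hy
        obtain ⟨hyA, hy2⟩ := hy
        push_neg at hy2
        obtain ⟨hyx, hynx⟩ := hy2
        refine ⟨?_, (hA y hyA).2⟩
        rw [Finset.mem_sdiff, Finset.mem_insert, Finset.mem_singleton]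
        refine ⟨(hA y hyA).1, ?_⟩
        push_neg
        refine ⟨?_, ?_⟩
        · intro h; exact hynx (by rw [← h, neg_neg])
        · intro h; exact hyx (neg_injective h)
      obtain ⟨R', hR'1, hR'2⟩ := ih _ hss hA'
      have hR'A : ∀ y ∈ R', y ∈ A \ {x, -x} := by
        intro y hy; rw [← hR'2]; exact Finset.mem_union_left _ hy
      have hNR'A : ∀ y ∈ R', -y ∈ A \ {x, -x} := by
        intro y hy; rw [← hR'2]
        exact Finset.mem_union_right _ (Finset.mem_image_of_mem _ hy)
      refine ⟨insert x R', ?_, ?_⟩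
      · intro y hy
        rcases Finset.mem_insert.1 hy with rfl | hy
        · intro h
          rcases Finset.mem_insert.1 h with h | h
          · exact hxnx h.symm
          · have := hR'A _ h
            rw [Finset.mem_sdiff, Finset.mem_insert, Finset.mem_singleton] at this
            exact this.2 (Or.inr rfl)
        · intro h
          rcases Finset.mem_insert.1 h with h | h
          · have := hNR'A _ hy
            rw [h, Finset.mem_sdiff, Finset.mem_insert, Finset.mem_singleton] at this
            exact this.2 (Or.inl rfl)
          · exact hR'1 y hy h
      · rw [Finset.image_insert, Finset.insert_union, Finset.union_insert, hR'2]
        ext y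
        rw [Finset.mem_insert, Finset.mem_insert, Finset.mem_sdiff, Finset.mem_insert,
          Finset.mem_singleton]
        constructor
        · rintro (rfl | rfl | h)
          · exact hx
          · exact hnx
          · exact h.1
        · intro hyA
          by_cases h1 : y = x
          · exact Or.inl h1
          · by_cases h2 : y = -x
            · exact Or.inr (Or.inl h2)
            · exact Or.inr (Or.inr ⟨hyA, by push_neg; exact ⟨h1, h2⟩⟩)

private lemma chain_of_forall10 (r : G → G → Prop) (l : List G) (hnd : l.Nodup)
    (h : ∀ x ∈ l, ∀ y ∈ l, x ≠ y → r x y) : l.Chain' r :=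
  (hnd.imp_of_mem (fun ha hb hne => h _ ha _ hb hne)).isChain

private lemma chain_glue10 (r : G → G → Prop) (l₁ l₂ : List G)
    (h₁ : l₁.Chain' r) (h₂ : l₂.Chain' r) (h : ∀ x ∈ l₁, ∀ y ∈ l₂, r x y) :
    (l₁ ++ l₂).Chain' r :=
  List.isChain_append.2 ⟨h₁, h₂, fun x hx y hy =>
    h x (List.mem_of_mem_getLast? hx) y (List.mem_of_mem_head? hy)⟩

private lemma getLast_ne_head10 {α : Type*} {l : List α} (hnd : l.Nodup) (h2 : 2 ≤ l.length)
    (hne : l ≠ []) : l.getLast hne ≠ l.head hne := by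
  match l, hnd, h2 with
  | a :: b :: t, hnd, _ =>
    have ht : (b :: t : List α) ≠ [] := by simp
    rw [List.getLast_cons ht, List.head_cons]
    intro h
    have hmem : (b :: t).getLast ht ∈ b :: t := List.getLast_mem ht
    rw [h] at hmem
    exact (List.nodup_cons.1 hnd).1 hmem

private lemma cyc10 {α : Type*} {r : α → α → Prop} : ∀ {l : List α},
    l.Chain' r → ∀ (hne : l ≠ []), r (l.getLast hne) (l.head hne) →
    (l ++ l.take 1).Chain' r
  | a :: t, hc, hne, hlast => by
    show ((a :: t) ++ [a]).Chain' r
    refine List.isChain_append.2 ⟨hc, List.isChain_singleton a, ?_⟩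
    intro x hx y hy
    rw [List.getLast?_eq_getLast hne, Option.mem_some_iff] at hx
    simp only [List.head?_cons, Option.mem_some_iff] at hy
    subst hx
    subst hy
    rwa [List.head_cons] at hlast

private lemma core10 (S : Finset G) (hcard : 4 ≤ S.card) (L : List G)
    (hnd : L.Nodup) (hts : L.toFinset = S)
    (hcyc : (L ++ L.take 1).Chain' (fun x y => x + y ≠ 0)) :
    ∃ f : ZMod S.card → G, Function.Injective f ∧ (∀ a, f a ∈ S) ∧
      (∀ s ∈ S, ∃ a, f a = s) ∧ ∀ a : ZMod S.card, f a + f (a + 1) ≠ 0 := by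
  have hlen : L.length = S.card := by
    rw [← hts]; exact (List.toFinset_card_of_nodup hnd).symm
  haveI : NeZero S.card := ⟨by omega⟩
  haveI : Fact (1 < S.card) := ⟨by omega⟩
  have hvlt : ∀ a : ZMod S.card, a.val < L.length := fun a => by
    rw [hlen]; exact ZMod.val_lt a
  refine ⟨fun a => L[a.val]'(hvlt a), ?_, ?_, ?_, ?_⟩
  · intro a b h
    simp only [hnd.getElem_inj_iff] at h
    exact ZMod.val_injective _ h
  · intro a
    have : L[a.val]'(hvlt a) ∈ L.toFinset := List.mem_toFinset.2 (List.getElem_mem _)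
    rwa [hts] at this
  · intro s hs
    rw [← hts, List.mem_toFinset, List.mem_iff_getElem] at hs
    obtain ⟨i, hi, hgi⟩ := hs
    refine ⟨(i : ZMod S.card), ?_⟩
    have hv : ((i : ZMod S.card)).val = i := ZMod.val_cast_of_lt (by omega)
    simp only [hv]
    exact hgi
  · intro a
    have hav : a.val < L.length := hvlt a
    set L' := L ++ L.take 1 with hL'
    have hlen' : L'.length = L.length + 1 := by
      rw [hL', List.length_append, List.length_take]
      omega
    have key := List.isChain_iff_getElem.1 hcyc a.val (by
      rw [hlen']; simpa using hvlt a)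
    have h1 : L'[a.val]'(by omega) = L[a.val]'(hvlt a) :=
      List.getElem_append_left (hvlt a)
    rw [h1] at key
    have hv2 : (a + 1).val = (a.val + 1) % S.card := by
      rw [ZMod.val_add, ZMod.val_one]
    rcases Nat.lt_or_ge (a.val + 1) S.card with hlt | hge
    · have h2 : L'[a.val + 1]'(by omega) = L[a.val + 1]'(by omega) :=
        List.getElem_append_left (by omega)
      rw [h2] at key
      have : (a + 1).val = a.val + 1 := by rw [hv2, Nat.mod_eq_of_lt hlt]
      simpa only [this] using key
    · have heq : a.val + 1 = S.card := by have := ZMod.val_lt a; omega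
      have h2 : L'[a.val + 1]'(by omega) = L[0]'(by omega) := by
        rw [List.getElem_append_right (by omega)]
        rw [List.getElem_take]
        congr 1
        omega
      rw [h2] at key
      have : (a + 1).val = 0 := by rw [hv2, heq, Nat.mod_self]
      simpa only [this] using key

end AuxStmt10

/-- A finite subset `S` of a group, closed under negation, not containing `0`, with
`|S| ≥ 4`, can be arranged cyclically so that no two cyclically adjacent elements sum to
zero. -/
theorem stmt10 {G : Type*} [AddGroup G] [DecidableEq G] (S : Finset G)
    (hcard : 4 ≤ S.card) (h0 : (0 : G) ∉ S) (hneg : ∀ s ∈ S, -s ∈ S) :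
    ∃ f : ZMod S.card → G, Function.Injective f ∧ (∀ a, f a ∈ S) ∧
      (∀ s ∈ S, ∃ a, f a = s) ∧ ∀ a : ZMod S.card, f a + f (a + 1) ≠ 0 := by
  classical
  have hBA : S.filter (fun x => x = -x) ∪ S.filter (fun x => ¬ x = -x) = S :=
    Finset.filter_union_filter_not_eq _ S
  set B := S.filter (fun x => x = -x) with hBdef
  set A := S.filter (fun x => ¬ x = -x) with hAdef
  have hmemB : ∀ x, x ∈ B ↔ x ∈ S ∧ x = -x := by
    intro x; rw [hBdef, Finset.mem_filter]
  have hmemA : ∀ x, x ∈ A ↔ x ∈ S ∧ x ≠ -x := by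
    intro x; rw [hAdef, Finset.mem_filter]
  have hABd : ∀ x, x ∈ A → x ∈ B → False := fun x ha hb =>
    ((hmemA x).1 ha).2 ((hmemB x).1 hb).2
  have hAprop : ∀ x ∈ A, -x ∈ A ∧ x ≠ -x := by
    intro x hx
    obtain ⟨hxS, hxn⟩ := (hmemA x).1 hx
    refine ⟨(hmemA _).2 ⟨hneg x hxS, ?_⟩, hxn⟩
    simp only [neg_neg]
    exact fun h => hxn h.symm
  obtain ⟨R, hR1, hR2⟩ := exists_rep10 A hAprop
  have hRA : ∀ x ∈ R, x ∈ A := by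
    intro x hx; rw [← hR2]; exact Finset.mem_union_left _ hx
  have hNA : ∀ x ∈ R, -x ∈ A := by
    intro x hx; rw [← hR2]
    exact Finset.mem_union_right _ (Finset.mem_image_of_mem _ hx)
  have hdisjBA : Disjoint B A := Finset.disjoint_right.2 (fun x ha hb => hABd x ha hb)
  have hcardS : S.card = B.card + A.card := by
    rw [← hBA, Finset.card_union_of_disjoint hdisjBA]
  have hcardA : A.card = R.card + R.card := by
    rw [← hR2, Finset.card_union_of_disjoint, Finset.card_image_of_injective _ neg_injective]
    rw [Finset.disjoint_left]
    intro x hx hximg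
    obtain ⟨u, hu, heq⟩ := Finset.mem_image.1 hximg
    exact hR1 u hu (heq ▸ hx)
  -- chain conditions on the three pieces
  have chainB : B.toList.Chain' (fun x y => x + y ≠ 0) := by
    refine chain_of_forall10 _ _ B.nodup_toList ?_
    intro x hx y hy hxy
    exact safe10 hxy (Or.inl ((hmemB x).1 (Finset.mem_toList.1 hx)).2)
  have chainR : R.toList.Chain' (fun x y => x + y ≠ 0) := by
    refine chain_of_forall10 _ _ R.nodup_toList ?_
    intro x hx y hy hxy hsum
    have hyx : y = -x := eq_neg_of_add_eq_zero_right hsum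
    exact hR1 x (Finset.mem_toList.1 hx) (hyx ▸ Finset.mem_toList.1 hy)
  have chainN : (R.toList.map (fun x => -x)).Chain' (fun x y => x + y ≠ 0) := by
    refine chain_of_forall10 _ _ (R.nodup_toList.map neg_injective) ?_
    intro x hx y hy hxy hsum
    obtain ⟨u, hu, rfl⟩ := List.mem_map.1 hx
    obtain ⟨v, hv, rfl⟩ := List.mem_map.1 hy
    have h1 : -v = -(-u) := eq_neg_of_add_eq_zero_right hsum
    rw [neg_neg] at h1
    exact hR1 v (Finset.mem_toList.1 hv) (by rw [h1]; exact Finset.mem_toList.1 hu)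
  have hmemLN : ∀ x ∈ R.toList.map (fun x => -x), x ∈ A := by
    intro x hx
    obtain ⟨u, hu, rfl⟩ := List.mem_map.1 hx
    exact hNA u (Finset.mem_toList.1 hu)
  rcases show R.card = 0 ∨ R.card = 1 ∨ 2 ≤ R.card by omega with hm | hm | hm
  -- Case R.card = 0 : all elements are involutions
  · have hRe : R = ∅ := Finset.card_eq_zero.1 hm
    have hAe : A = ∅ := by rw [← hR2, hRe]; simp
    have hBS : B.toList.toFinset = S := by
      rw [Finset.toList_toFinset, ← hBA, hAe, Finset.union_empty]
    have hlenB : 2 ≤ B.toList.length := by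
      rw [Finset.length_toList]
      omega
    have hne : B.toList ≠ [] := by
      intro h; rw [h] at hlenB; simp at hlenB
    refine core10 S hcard B.toList B.nodup_toList hBS ?_
    refine cyc10 chainB hne ?_
    refine safe10 (getLast_ne_head10 B.nodup_toList hlenB hne) ?_
    exact Or.inl ((hmemB _).1 (Finset.mem_toList.1 (List.getLast_mem hne))).2
  -- Case R.card = 1 : one inversion pair, at least two involutions
  · obtain ⟨a, ha⟩ := Finset.card_eq_one.1 hm
    have haA : a ∈ A := hRA a (by rw [ha]; exact Finset.mem_singleton_self a)
    have hnaA : -a ∈ A := hNA a (by rw [ha]; exact Finset.mem_singleton_self a)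
    have hana : a ≠ -a := (hAprop a haA).2
    have hAeq : A = {a, -a} := by
      rw [← hR2, ha, Finset.image_singleton]
      ext y; simp
    have hcardB : 2 ≤ B.card := by
      have : A.card = 2 := by rw [hcardA, hm]
      omega
    have hBne : B.toList ≠ [] := by
      intro h
      have := Finset.length_toList B
      rw [h] at this
      simp at this
      omega
    obtain ⟨b, rest, hb⟩ := List.exists_cons_of_ne_nil hBne
    have hrestne : rest ≠ [] := by
      intro h
      have := Finset.length_toList B
      rw [hb, h] at this
      simp at this
      omega
    obtain ⟨c, u, hc⟩ := List.exists_cons_of_ne_nil hrestne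
    have hbB : b ∈ B := Finset.mem_toList.1 (by rw [hb]; exact List.mem_cons_self)
    have hrestB : ∀ x ∈ rest, x ∈ B := fun x hx =>
      Finset.mem_toList.1 (by rw [hb]; exact List.mem_cons_of_mem _ hx)
    have hbinv : b = -b := ((hmemB b).1 hbB).2
    have hnodupB : (b :: rest).Nodup := by rw [← hb]; exact B.nodup_toList
    set L : List G := a :: b :: -a :: rest with hLdef
    have hndL : L.Nodup := by
      rw [hLdef]
      refine List.nodup_cons.2 ⟨?_, List.nodup_cons.2 ⟨?_, List.nodup_cons.2 ⟨?_, ?_⟩⟩⟩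
      · intro h
        rcases List.mem_cons.1 h with h | h
        · exact hABd a haA (h ▸ hbB)
        rcases List.mem_cons.1 h with h | h
        · exact hana h
        · exact hABd a haA (hrestB a h)
      · intro h
        rcases List.mem_cons.1 h with h | h
        · exact hABd (-a) hnaA (h ▸ hbB)
        · exact (List.nodup_cons.1 hnodupB).1 h
      · intro h
        exact hABd (-a) hnaA (hrestB _ h)
      · exact (List.nodup_cons.1 hnodupB).2
    have htsL : L.toFinset = S := by
      have h1 : (b :: rest).toFinset = B := by rw [← hb]; exact Finset.toList_toFinset B
      rw [hLdef, ← hBA, hAeq]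
      ext y
      have h2 : y ∈ B ↔ y = b ∨ y ∈ rest := by rw [← h1]; simp
      simp only [List.toFinset_cons, Finset.mem_insert, Finset.mem_union, List.mem_toFinset,
        Finset.mem_singleton, h2]
      tauto
    refine core10 S hcard L hndL htsL ?_
    have hchainL : L.Chain' (fun x y => x + y ≠ 0) := by
      rw [hLdef]
      refine List.isChain_cons_cons.2 ⟨?_, List.isChain_cons_cons.2 ⟨?_, ?_⟩⟩
      · exact safe10 (fun h => hABd a haA (h ▸ hbB)) (Or.inr hbinv)
      · exact safe10 (fun h => hABd (-a) hnaA (h ▸ hbB)) (Or.inl hbinv)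
      · refine List.isChain_cons.2 ⟨?_, ?_⟩
        · intro y hy
          rw [hc] at hy
          simp only [List.head?_cons, Option.mem_some_iff] at hy
          subst hy
          have hcB : c ∈ B := hrestB c (by rw [hc]; exact List.mem_cons_self)
          exact safe10 (fun h => hABd (-a) hnaA (h ▸ hcB)) (Or.inr ((hmemB c).1 hcB).2)
        · have hcb := chainB
          rw [hb] at hcb
          exact (List.isChain_cons.1 hcb).2
    have hLne : L ≠ [] := by rw [hLdef]; simp
    refine cyc10 hchainL hLne ?_
    have hgl2 : L.getLast? = some (rest.getLast hrestne) := by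
      rw [hLdef, show (a :: b :: -a :: rest : List G) = [a, b, -a] ++ rest from rfl,
        List.getLast?_append, List.getLast?_eq_getLast hrestne]
      rfl
    have hgl : L.getLast hLne = rest.getLast hrestne := by
      have h3 := List.getLast?_eq_getLast (l := L) hLne
      rw [hgl2] at h3
      exact (Option.some.inj h3).symm
    have hglB : rest.getLast hrestne ∈ B := hrestB _ (List.getLast_mem hrestne)
    have hhd : L.head hLne = a := by
      have h3 := List.head?_eq_head hLne
      have h4 : L.head? = some a := by rw [hLdef]; rfl
      rw [h4] at h3
      exact (Option.some.inj h3).symm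
    rw [hgl, hhd]
    exact safe10 (fun h => hABd a haA (h ▸ hglB)) (Or.inl ((hmemB _).1 hglB).2)
  -- Case 2 ≤ R.card
  · have hLRlen : R.toList.length = R.card := Finset.length_toList R
    have hLRne : R.toList ≠ [] := by
      intro h; rw [h] at hLRlen; simp at hLRlen; omega
    obtain ⟨a, T, hT⟩ := List.exists_cons_of_ne_nil hLRne
    have hTlen : T.length + 1 = R.card := by rw [← hLRlen, hT]; simp
    have hTne : T ≠ [] := by
      intro h; rw [h] at hTlen; simp at hTlen; omega
    have haR : a ∈ R := Finset.mem_toList.1 (by rw [hT]; exact List.mem_cons_self)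
    have haA : a ∈ A := hRA a haR
    have hnodupLR : (a :: T).Nodup := by rw [← hT]; exact R.nodup_toList
    -- the key "ends" fact
    have hgTne : (a :: T).getLast (by simp) ≠ a := by
      intro hcon
      have hmem : (a :: T).getLast (by simp) ∈ T := by
        rw [List.getLast_cons hTne]; exact List.getLast_mem hTne
      rw [hcon] at hmem
      exact (List.nodup_cons.1 hnodupLR).1 hmem
    set LN : List G := R.toList.map (fun x => -x) with hLNdef
    have hLNne : LN ≠ [] := by rw [hLNdef, hT]; simp
    set L : List G := R.toList ++ (LN ++ B.toList) with hLdef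
    have hndL : L.Nodup := by
      rw [hLdef]
      refine List.Nodup.append R.nodup_toList
        (List.Nodup.append (R.nodup_toList.map neg_injective) B.nodup_toList ?_) ?_
      · intro x hx hxB
        exact hABd x (hmemLN x hx) (Finset.mem_toList.1 hxB)
      · intro x hx hmem
        have hxR : x ∈ R := Finset.mem_toList.1 hx
        rcases List.mem_append.1 hmem with h | h
        · obtain ⟨v, hv, heq⟩ := List.mem_map.1 h
          exact hR1 v (Finset.mem_toList.1 hv) (heq ▸ hxR)
        · exact hABd x (hRA x hxR) (Finset.mem_toList.1 h)
    have htsL : L.toFinset = S := by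
      rw [hLdef, List.toFinset_append, List.toFinset_append, Finset.toList_toFinset,
        Finset.toList_toFinset]
      have himg : LN.toFinset = R.image (fun x => -x) := by
        rw [hLNdef]; ext y; simp
      rw [himg, ← Finset.union_assoc, hR2, ← hBA, Finset.union_comm]
    refine core10 S hcard L hndL htsL ?_
    have hchainL : L.Chain' (fun x y => x + y ≠ 0) := by
      rw [hLdef]
      refine List.isChain_append.2 ⟨chainR, ?_, ?_⟩
      · refine chain_glue10 _ _ _ chainN chainB ?_
        intro x hx y hy
        exact safe10 (fun hxy => hABd x (hmemLN x hx) (hxy ▸ Finset.mem_toList.1 hy))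
          (Or.inr ((hmemB y).1 (Finset.mem_toList.1 hy)).2)
      · intro x hx y hy
        rw [hT, List.getLast?_eq_getLast (by simp), Option.mem_some_iff] at hx
        have hy' : y = -a := by
          rw [hLNdef, hT] at hy
          simp only [List.map_cons, List.cons_append, List.head?_cons,
            Option.mem_some_iff] at hy
          exact hy.symm
        subst hy'
        rw [← hx]
        intro hsum
        have h1 : -a = -((a :: T).getLast (by simp)) := eq_neg_of_add_eq_zero_right hsum
        exact hgTne (neg_injective h1.symm)
    have hLne : L ≠ [] := by rw [hLdef, hT]; simp
    refine cyc10 hchainL hLne ?_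
    have hhd : L.head hLne = a := by
      have : L = a :: (T ++ (LN ++ B.toList)) := by rw [hLdef, hT]; rfl
      simp [this]
    rw [hhd]
    rcases eq_or_ne B.toList [] with hBe | hBne
    · -- no involutions: last element is -(getLast (a :: T))
      have h1 : L.getLast? = some (-((a :: T).getLast (by simp))) := by
        rw [hLdef, hBe, List.append_nil, List.getLast?_append, hLNdef, hT,
          List.getLast?_eq_getLast (by simp), List.getLast_map]
        rfl
      have h2 : L.getLast hLne = -((a :: T).getLast (by simp)) := by
        have h3 := List.getLast?_eq_getLast (l := L) hLne
        rw [h1] at h3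
        exact (Option.some.inj h3).symm
      rw [h2]
      intro hsum
      have h4 : -((a :: T).getLast (by simp)) = -a := eq_neg_of_add_eq_zero_left hsum
      exact hgTne (neg_injective h4)
    · -- last element is the last involution
      have h1 : L.getLast? = some (B.toList.getLast hBne) := by
        rw [hLdef, List.getLast?_append, List.getLast?_append,
          List.getLast?_eq_getLast hBne]
        rfl
      have h2 : L.getLast hLne = B.toList.getLast hBne := by
        have h3 := List.getLast?_eq_getLast (l := L) hLne
        rw [h1] at h3
        exact (Option.some.inj h3).symm
      have hglB : B.toList.getLast hBne ∈ B := Finset.mem_toList.1 (List.getLast_mem hBne)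
      rw [h2]
      exact safe10 (fun h => hABd a haA (h ▸ hglB)) (Or.inl ((hmemB _).1 hglB).2)
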